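/- Let L_n(x;q) be the q-Laguerre polynomials defined by the recurrence L_{n+1}(x;q) = (x - y[n+1]_q - [n]_q) L_n(x;q) - y [n]_q² L_{n-1}(x;q) with L_0 = 1, L_{-1} = 0. Then L_n(x;q) = Σ_{k=0}^n (-1)^{n-k} (n!_q / k!_q) · qbinom(n,k) · q^{k(k-n)} y^{n-k} · Π_{j=0}^{k-1} (x - (1 - y q^{-j})[j]_q). -/

import Mathlib

open Polynomial

/-- The q-integer `[n]_q = 1 + q + ⋯ + q^{n-1}`. -/
def qInt {K : Type*} [CommRing K] (q : K) (n : ℕ) : K := ∑ i ∈ Finset.range n, q ^ i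

/-- The q-factorial `n!_q`. -/
def qFact {K : Type*} [CommRing K] (q : K) (n : ℕ) : K := ∏ j ∈ Finset.range n, qInt q (j + 1)

/-- The Gaussian binomial coefficient. -/
noncomputable def qBinom {K : Type*} [Field K] (q : K) (n k : ℕ) : K :=
  qFact q n / (qFact q k * qFact q (n - k))

/-- The q-Laguerre polynomials, defined by the three-term recurrence
`L_{n+1} = (x - y[n+1]_q - [n]_q) L_n - y [n]_q² L_{n-1}` with `L_0 = 1`, `L_{-1} = 0`. -/
noncomputable def qLag {K : Type*} [CommRing K] (y q : K) : ℕ → Polynomial K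
  | 0 => 1
  | 1 => X - C (y * qInt q 1 + qInt q 0)
  | n + 2 =>
      (X - C (y * qInt q (n + 2) + qInt q (n + 1))) * qLag y q (n + 1)
        - C (y * (qInt q (n + 1)) ^ 2) * qLag y q n

section aux
variable {K : Type*} [Field K] (y q : K)

lemma qInt_zero : qInt q 0 = 0 := by simp [qInt]
lemma qInt_one : qInt q 1 = 1 := by simp [qInt]
lemma qInt_succ (m : ℕ) : qInt q (m+1) = qInt q m + q^m := by simp [qInt, Finset.sum_range_succ]
lemma qInt_add (a b : ℕ) : qInt q (a+b) = qInt q a + q^a * qInt q b := by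
  simp [qInt, Finset.sum_range_add, Finset.mul_sum, pow_add]
lemma qInt_mul_sub (m : ℕ) : (q - 1) * qInt q m = q^m - 1 := by
  rw [mul_comm]; exact geom_sum_mul q m
lemma qFact_succ (m : ℕ) : qFact q (m+1) = qFact q m * qInt q (m+1) := Finset.prod_range_succ _ _
lemma qFact_zero : qFact q 0 = 1 := rfl
lemma qFact_ne_zero (hroot : ∀ m : ℕ, 0 < m → qInt q m ≠ 0) (m : ℕ) : qFact q m ≠ 0 := by
  rw [qFact]
  exact Finset.prod_ne_zero_iff.2 fun j _ => hroot (j+1) (Nat.succ_pos j)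
lemma qFact_add (a b : ℕ) :
    qFact q (a+b) = qFact q a * ∏ i ∈ Finset.range b, qInt q (a+i+1) := by
  rw [qFact, qFact, Finset.prod_range_add]

noncomputable def cdef (y q : K) (m k : ℕ) : K :=
  if k ≤ m then
    (-1 : K) ^ (m - k) * (qFact q m / qFact q k) * qBinom q m k *
      q ^ ((k : ℤ) * ((k : ℤ) - (m : ℤ))) * y ^ (m - k)
  else 0

lemma cdef_of_gt (m k : ℕ) (h : m < k) : cdef y q m k = 0 := if_neg (by omega)

lemma key0 (k d : ℕ) :
    q^k * qInt q (k+d+2)^2 * y^2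
      = q^(k+d+2) * qInt q k^2 * y^2 - q^(2*k)*qInt q (d+2)*qInt q k*y
        + q^k*qInt q (d+2)*qInt q k*y^2
        + q^(2*k)*qInt q (d+2)*qInt q (k+d+2)*y^2 + q^(2*k)*qInt q (d+2)*qInt q (k+d+1)*y
        - q^(3*k)*qInt q (d+2)*qInt q (d+1)*y := by
  have h1 : qInt q (k+d+2) = qInt q k + q^k * qInt q (d+2) := by
    rw [show k+d+2 = k+(d+2) by ring, qInt_add]
  have h2 : qInt q (k+d+1) = qInt q k + q^k * qInt q (d+1) := by
    rw [show k+d+1 = k+(d+1) by ring, qInt_add]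
  have hA : (q - 1) * qInt q k = q^k - 1 := qInt_mul_sub q k
  have hB : (q - 1) * qInt q (d+2) = q^(d+2) - 1 := qInt_mul_sub q (d+2)
  rw [h1, h2]
  linear_combination (q^k * qInt q k * qInt q k * y^2) * hB
    - (q^k * qInt q k * qInt q (d+2) * y^2) * hA

lemma key2 (n : ℕ) :
    qInt q (n+2)^2 = q * qInt q (n+1)^2 + qInt q (n+1) + q^(n+1)*qInt q (n+2) := by
  have h : qInt q (n+2) = qInt q (n+1) + q^(n+1) := qInt_succ q (n+1)
  have hA : (q - 1) * qInt q (n+1) = q^(n+1) - 1 := qInt_mul_sub q (n+1)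
  rw [h]
  linear_combination (-(qInt q (n+1))) * hA

lemma cdef_eq (hq : q ≠ 0) (hroot : ∀ m : ℕ, 0 < m → qInt q m ≠ 0) (k d : ℕ) :
    cdef y q (k+d) k
      = (-1:K)^d * (∏ i ∈ Finset.range d, qInt q (k+i+1))^2 / qFact q d
          * (q^(k*d))⁻¹ * y^d := by
  have hFk := qFact_ne_zero q hroot k
  have hFd := qFact_ne_zero q hroot d
  rw [cdef, if_pos (Nat.le_add_right k d), qBinom, Nat.add_sub_cancel_left,
    show (k:ℤ)*((k:ℤ) - ((k+d : ℕ):ℤ)) = -((k*d : ℕ) : ℤ) by push_cast; ring,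
    zpow_neg, zpow_natCast, qFact_add]
  field_simp

lemma cdef_diag (hq : q ≠ 0) (hroot : ∀ m : ℕ, 0 < m → qInt q m ≠ 0) (m : ℕ) :
    cdef y q m m = 1 := by
  have := cdef_eq y q hq hroot m 0
  simpa [qFact_zero] using this

lemma cdef_zero (hroot : ∀ m : ℕ, 0 < m → qInt q m ≠ 0) (m : ℕ) :
    cdef y q m 0 = (-1:K)^m * qFact q m * y^m := by
  have hFm := qFact_ne_zero q hroot m
  rw [cdef, if_pos (Nat.zero_le m), qBinom]
  simp [qFact_zero, hFm]

lemma clear_helper {K : Type*} [Field K] (a b c e : K) (hb : b ≠ 0) (hc : c ≠ 0) :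
    (a / b * c⁻¹ * e) * (b * c) = a * e := by
  field_simp

lemma cdef_eq' {K : Type*} [Field K] (y q : K) (hq : q ≠ 0)
    (hroot : ∀ m : ℕ, 0 < m → qInt q m ≠ 0) (k d : ℕ) :
    cdef y q (k+d) k * (qFact q d * q^(k*d))
      = (-1:K)^d * (∏ i ∈ Finset.range d, qInt q (k+i+1))^2 * y^d := by
  rw [cdef_eq y q hq hroot k d]
  exact clear_helper _ _ _ _ (qFact_ne_zero q hroot d) (pow_ne_zero _ hq)

lemma keyc {K : Type*} [Field K] (y q : K) (hq : q ≠ 0)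
    (hroot : ∀ m : ℕ, 0 < m → qInt q m ≠ 0) (n k : ℕ)
    (hk : k ≤ n + 2) :
    cdef y q (n+2) k
      = (if k = 0 then 0 else cdef y q (n+1) (k-1))
        + cdef y q (n+1) k *
            ((1 - y * q ^ (-(k:ℤ))) * qInt q k - (y * qInt q (n+2) + qInt q (n+1)))
        - y * (qInt q (n+1))^2 * cdef y q n k := by
  have hqp : ∀ m : ℕ, (q:K)^m ≠ 0 := fun m => pow_ne_zero m hq
  rcases Nat.eq_zero_or_pos k with rfl | hk0
  · -- k = 0
    rw [if_pos rfl, cdef_zero y q hroot, cdef_zero y q hroot, cdef_zero y q hroot,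
      qInt_zero, qFact_succ q (n+1), qFact_succ q n]
    push_cast
    ring
  obtain ⟨j, rfl⟩ : ∃ j, k = j + 1 := ⟨k - 1, by omega⟩
  have hz : (q : K) ^ (-((j+1 : ℕ) : ℤ)) = (q ^ (j+1))⁻¹ := by
    rw [zpow_neg, zpow_natCast]
  have hinv : (q:K)^(j+1) * (q^(j+1))⁻¹ = 1 := mul_inv_cancel₀ (hqp (j+1))
  rcases (by omega : j + 1 ≤ n ∨ j + 1 = n + 1 ∨ j + 1 = n + 2) with hkn | hkn | hkn
  · -- main case: k = j+1 ≤ n, write n = (j+1) + d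
    obtain ⟨d, rfl⟩ : ∃ d, n = (j+1) + d := ⟨n - (j+1), by omega⟩
    have hFd := qFact_ne_zero q hroot d
    have hI1 := hroot (d+1) (by omega)
    have hI2 := hroot (d+2) (by omega)
    have hP2 : (∏ i ∈ Finset.range (d+2), qInt q (j+1+i+1))
        = ((∏ i ∈ Finset.range d, qInt q (j+1+i+1)) * qInt q (j+1+d+1)) * qInt q (j+1+d+2) := by
      rw [show d+2 = d+1+1 from rfl, Finset.prod_range_succ, Finset.prod_range_succ,
        show j+1+(d+1)+1 = j+1+d+2 from by omega]
    have hP1 : (∏ i ∈ Finset.range (d+1), qInt q (j+1+i+1))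
        = (∏ i ∈ Finset.range d, qInt q (j+1+i+1)) * qInt q (j+1+d+1) := by
      rw [Finset.prod_range_succ]
    have hQ : (∏ i ∈ Finset.range (d+2), qInt q (j+i+1))
        = ((∏ i ∈ Finset.range d, qInt q (j+1+i+1)) * qInt q (j+1+d+1)) * qInt q (j+1) := by
      rw [show d+2 = d+1+1 from rfl, Finset.prod_range_succ']
      congr 1
      rw [← hP1]
      exact Finset.prod_congr rfl fun i _ => by rw [show j+(i+1)+1 = j+1+i+1 from by omega]
    have hF2 : qFact q (d+2) = qFact q d * qInt q (d+1) * qInt q (d+2) := by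
      rw [show d+2 = d+1+1 from rfl, qFact_succ, qFact_succ]
    have hF1 : qFact q (d+1) = qFact q d * qInt q (d+1) := qFact_succ q d
    have E1 := cdef_eq' y q hq hroot (j+1) (d+2)
    rw [show (j+1)+(d+2) = j+1+d+2 from by omega, hP2, hF2] at E1
    have E2 := cdef_eq' y q hq hroot j (d+2)
    rw [show j+(d+2) = j+1+d+1 from by omega, hQ, hF2] at E2
    have E3 := cdef_eq' y q hq hroot (j+1) (d+1)
    rw [show (j+1)+(d+1) = j+1+d+1 from by omega, hP1, hF1] at E3
    have E4 := cdef_eq' y q hq hroot (j+1) d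
    rw [if_neg (Nat.succ_ne_zero j), Nat.add_sub_cancel, hz]
    have hD : (qFact q d * qInt q (d+1) * qInt q (d+2) * q^((j+1)*(d+2)) * q^(2*(j+1)) : K) ≠ 0 :=
      mul_ne_zero (mul_ne_zero (mul_ne_zero (mul_ne_zero hFd hI1) hI2) (hqp _)) (hqp _)
    apply mul_left_cancel₀ hD
    linear_combination (q^(2*(j+1))) * E1 - (q^(d+2+2*(j+1))) * E2
      - (qInt q (d+2) * q^(3*(j+1)) *
          ((1 - y * (q^(j+1))⁻¹) * qInt q (j+1)
            - (y * qInt q (j+1+d+2) + qInt q (j+1+d+1)))) * E3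
      + (y * qInt q (j+1+d+1)^2 * qInt q (d+1) * qInt q (d+2) * q^(4*(j+1))) * E4
      + (y * qInt q (j+1) * qInt q (d+2) * q^(2*(j+1)) *
          ((-1:K)^(d+1) * ((∏ i ∈ Finset.range d, qInt q (j+1+i+1)) * qInt q (j+1+d+1))^2
            * y^(d+1))) * hinv
      + ((-1:K)^d * ((∏ i ∈ Finset.range d, qInt q (j+1+i+1)) * qInt q (j+1+d+1))^2
          * y^d * q^(j+1)) * key0 y q (j+1) d
  · -- k = n+1
    obtain rfl : n = j := by omega
    have hq1 : qFact q 1 = (1:K) := by simp [qFact, qInt]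
    have E1 := cdef_eq' y q hq hroot (n+1) 1
    have E2 := cdef_eq' y q hq hroot n 1
    rw [hq1, one_mul] at E1 E2
    simp only [Finset.prod_range_one] at E1 E2
    rw [show (n+1)+1 = n+2 from rfl, show n+1+0+1 = n+2 from rfl] at E1
    rw [show n+0+1 = n+1 from rfl] at E2
    rw [if_neg (Nat.succ_ne_zero n), Nat.add_sub_cancel, cdef_diag y q hq hroot,
      cdef_of_gt y q n (n+1) (by omega), hz]
    apply mul_left_cancel₀ (hqp (n+1))
    linear_combination E1 - q * E2 + (y * qInt q (n+1)) * hinv - y * key2 q n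
  · -- k = n+2
    obtain rfl : j = n + 1 := by omega
    rw [show n+1+1 = n+2 from rfl, if_neg (Nat.succ_ne_zero (n+1)),
      show n+2-1 = n+1 from rfl, cdef_diag y q hq hroot, cdef_diag y q hq hroot,
      cdef_of_gt y q (n+1) (n+2) (by omega), cdef_of_gt y q n (n+2) (by omega)]
    ring
end aux

section polymain
variable {K : Type*} [Field K]

noncomputable def Pp (y q : K) (k : ℕ) : Polynomial K :=
  ∏ j ∈ Finset.range k, (X - C ((1 - y * q ^ (-(j : ℤ))) * qInt q j))

lemma Pp_succ (y q : K) (k : ℕ) :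
    Pp y q (k+1) = Pp y q k * (X - C ((1 - y * q ^ (-(k:ℤ))) * qInt q k)) :=
  Finset.prod_range_succ _ _

lemma sum_ext (y q : K) (m M : ℕ) (h : m + 1 ≤ M) :
    ∑ k ∈ Finset.range (m+1), C (cdef y q m k) * Pp y q k
      = ∑ k ∈ Finset.range M, C (cdef y q m k) * Pp y q k :=
  Finset.sum_subset (Finset.range_subset_range.2 h) (fun x hx hnx => by
    rw [cdef_of_gt y q m x (by simp only [Finset.mem_range] at hx hnx; omega),
      map_zero, zero_mul])

lemma qLag_formula (y q : K) (hq : q ≠ 0)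
    (hroot : ∀ m : ℕ, 0 < m → qInt q m ≠ 0) (n : ℕ) :
    qLag y q n = ∑ k ∈ Finset.range (n+1), C (cdef y q n k) * Pp y q k := by
  induction n using Nat.twoStepInduction with
  | zero =>
    rw [qLag, Finset.sum_range_one, cdef_diag y q hq hroot, map_one, one_mul]
    rw [Pp]
    simp
  | one =>
    rw [qLag, Finset.sum_range_succ, Finset.sum_range_one, cdef_diag y q hq hroot,
      cdef_zero y q hroot, Pp, Pp]
    simp [qInt_zero, qInt_one, qFact, Finset.prod_range_one]
    ring
  | more n ih1 ih2 =>
    have hqlag : qLag y q (n+2)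
        = (X - C (y * qInt q (n + 2) + qInt q (n + 1))) * qLag y q (n + 1)
            - C (y * (qInt q (n + 1)) ^ 2) * qLag y q n := by
      rw [qLag]
    rw [hqlag, ih1, ih2, sum_ext y q (n+1) (n+2+1) (by omega), sum_ext y q n (n+2+1) (by omega)]
    have step1 : (X - C (y * qInt q (n+2) + qInt q (n+1)))
          * (∑ k ∈ Finset.range (n+2+1), C (cdef y q (n+1) k) * Pp y q k)
        - C (y * (qInt q (n+1))^2) * (∑ k ∈ Finset.range (n+2+1), C (cdef y q n k) * Pp y q k)
      = ∑ k ∈ Finset.range (n+2+1),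
          (C (cdef y q (n+1) k) * Pp y q (k+1)
            + C (cdef y q (n+1) k *
                ((1 - y * q^(-(k:ℤ))) * qInt q k - (y * qInt q (n+2) + qInt q (n+1)))) * Pp y q k
            - C (y * (qInt q (n+1))^2 * cdef y q n k) * Pp y q k) := by
      rw [Finset.mul_sum, Finset.mul_sum, ← Finset.sum_sub_distrib]
      apply Finset.sum_congr rfl
      intro k _
      simp only [Pp_succ, map_mul, map_sub, map_add, map_one]
      ring
    rw [step1]
    have step2 : ∑ k ∈ Finset.range (n+2+1), C (cdef y q (n+1) k) * Pp y q (k+1)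
        = ∑ k ∈ Finset.range (n+2+1),
            (if k = 0 then 0 else C (cdef y q (n+1) (k-1))) * Pp y q k := by
      conv_lhs => rw [Finset.sum_range_succ]
      conv_rhs => rw [Finset.sum_range_succ']
      rw [cdef_of_gt y q (n+1) (n+2) (by omega), map_zero, zero_mul, add_zero]
      simp only [Nat.succ_ne_zero, if_false, Nat.add_sub_cancel, if_pos, zero_mul, add_zero]
    rw [Finset.sum_sub_distrib, Finset.sum_add_distrib, step2,
      ← Finset.sum_add_distrib, ← Finset.sum_sub_distrib]
    apply Finset.sum_congr rfl
    intro k hk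
    rw [keyc y q hq hroot n k (by simp only [Finset.mem_range] at hk; omega)]
    simp only [map_add, map_sub, map_mul, apply_ite C, map_zero]
    ring
end polymain

/-- Explicit formula for the q-Laguerre polynomials. -/
theorem stmt3 (K : Type*) [Field K] (y q : K) (hq : q ≠ 0)
    (hroot : ∀ m : ℕ, 0 < m → qInt q m ≠ 0) (n : ℕ) :
    qLag y q n =
      ∑ k ∈ Finset.range (n + 1),
        C ((-1 : K) ^ (n - k) * (qFact q n / qFact q k) * qBinom q n k *
            q ^ ((k : ℤ) * ((k : ℤ) - (n : ℤ))) * y ^ (n - k)) *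
          ∏ j ∈ Finset.range k, (X - C ((1 - y * q ^ (-(j : ℤ))) * qInt q j)) := by
  rw [qLag_formula y q hq hroot n]
  apply Finset.sum_congr rfl
  intro k hk
  have hkn : k ≤ n := by simp only [Finset.mem_range] at hk; omega
  have hc : cdef y q n k
      = (-1 : K) ^ (n - k) * (qFact q n / qFact q k) * qBinom q n k *
          q ^ ((k : ℤ) * ((k : ℤ) - (n : ℤ))) * y ^ (n - k) := if_pos hkn
  rw [hc]
  rfl
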